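/- For the fourth-order condition solution: given the conditions C1–C3 of the paper restricted to a three-stage method, if b_2, b_3 are given by the solutions to C1 and C2 (as linear combinations of φ_3, φ_4 with the coefficients in eq. (3.10) of the paper), then condition C3, namely b_2(z)α₂₁³P₂₁³ + b_3(z)α₃₁³P₃₁³ = 6φ_4(z) for all z, holds if and only if α₂₁ = 2g₂₁P₂₂/P₂₁² and α₃₁ = 2g₃₁P₃₂/P₃₁². -/

import Mathlib

noncomputable def phi (k : ℕ) (z : ℂ) : ℂ := ∑' j : ℕ, z ^ j / (Nat.factorial (j + k) : ℂ)

lemma summable_phi (k : ℕ) (z : ℂ) :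
    Summable (fun j : ℕ => z ^ j / (Nat.factorial (j + k) : ℂ)) := by
  apply Summable.of_norm
  apply Summable.of_nonneg_of_le (fun j => norm_nonneg _)
    (fun j => ?_) (Real.summable_pow_div_factorial ‖z‖)
  rw [norm_div, norm_pow]
  have h1 : (0:ℝ) < (Nat.factorial j : ℝ) := by positivity
  have h2 : (Nat.factorial j : ℝ) ≤ ‖((Nat.factorial (j + k) : ℂ))‖ := by
    rw [Complex.norm_natCast]
    exact_mod_cast Nat.factorial_le (Nat.le_add_right j k)
  gcongr

lemma phi_zero (k : ℕ) : phi k 0 = 1 / (Nat.factorial k : ℂ) := by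
  unfold phi
  rw [tsum_eq_single 0]
  · simp
  · intro j hj
    simp [zero_pow hj]

lemma phi3_eq (z : ℂ) : phi 3 z = 1/6 + z * phi 4 z := by
  unfold phi
  rw [← tsum_mul_left, Summable.tsum_eq_zero_add (summable_phi 3 z)]
  have : ∀ j : ℕ, z ^ (j+1) / (Nat.factorial (j + 1 + 3) : ℂ)
      = z * (z ^ j / (Nat.factorial (j + 4) : ℂ)) := by
    intro j
    have : j + 1 + 3 = j + 4 := by ring
    rw [this]; ring
  simp only [this]
  norm_num [Nat.factorial]

lemma phi_combo (A B : ℂ)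
    (h : ∀ z : ℂ, A * phi 3 z + B * phi 4 z = 6 * phi 4 z) : A = 0 ∧ B = 6 := by
  have hA : A = 0 := by
    by_contra hA
    have h1 := h ((6 - B) / A)
    rw [phi3_eq] at h1
    have hz : A * ((6 - B) / A) = 6 - B := by field_simp
    have h2 : A * (1/6) = 0 := by
      linear_combination h1 - phi 4 ((6 - B) / A) * hz
    exact hA (by linear_combination 6 * h2)
  refine ⟨hA, ?_⟩
  have h0 := h 0
  rw [hA, phi_zero 4] at h0
  have h24 : (Nat.factorial 4 : ℂ) = 24 := by norm_num [Nat.factorial]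
  rw [h24] at h0
  linear_combination 24 * h0

theorem fourth_order_C3_iff
    (α₂₁ α₃₁ g₂₁ g₃₁ P₂₁ P₂₂ P₃₁ P₃₂ : ℝ)
    (hα₂₁ : α₂₁ ≠ 0) (hα₃₁ : α₃₁ ≠ 0) (hP₂₁ : P₂₁ ≠ 0) (hP₃₁ : P₃₁ ≠ 0)
    (hD : g₃₁ * P₂₁ * P₃₂ - g₂₁ * P₂₂ * P₃₁ ≠ 0)
    (b₂ b₃ : ℂ → ℂ)
    (hb₂ : ∀ z, b₂ z = ((2 * g₃₁ * P₃₂ : ℝ) : ℂ) * phi 3 z / ((α₂₁^2 * P₂₁ * (g₃₁ * P₂₁ * P₃₂ - g₂₁ * P₂₂ * P₃₁) : ℝ) : ℂ)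
            - ((3 * P₃₁ : ℝ) : ℂ) * phi 4 z / ((α₂₁^2 * P₂₁ * (g₃₁ * P₂₁ * P₃₂ - g₂₁ * P₂₂ * P₃₁) : ℝ) : ℂ))
    (hb₃ : ∀ z, b₃ z = ((2 * g₂₁ * P₂₂ : ℝ) : ℂ) * phi 3 z / ((α₃₁^2 * P₃₁ * (g₂₁ * P₂₂ * P₃₁ - g₃₁ * P₂₁ * P₃₂) : ℝ) : ℂ)
            - ((3 * P₂₁ : ℝ) : ℂ) * phi 4 z / ((α₃₁^2 * P₃₁ * (g₂₁ * P₂₂ * P₃₁ - g₃₁ * P₂₁ * P₃₂) : ℝ) : ℂ)) :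
    (∀ z : ℂ, b₂ z * (α₂₁ : ℂ)^3 * (P₂₁ : ℂ)^3 + b₃ z * (α₃₁ : ℂ)^3 * (P₃₁ : ℂ)^3
        = 6 * phi 4 z)
    ↔ (α₂₁ = 2 * g₂₁ * P₂₂ / P₂₁^2 ∧ α₃₁ = 2 * g₃₁ * P₃₂ / P₃₁^2) := by
  have hND : g₂₁ * P₂₂ * P₃₁ - g₃₁ * P₂₁ * P₃₂ ≠ 0 := fun h => hD (by linarith)
  have hden2 : (α₂₁^2 * P₂₁ * (g₃₁ * P₂₁ * P₃₂ - g₂₁ * P₂₂ * P₃₁) : ℝ) ≠ 0 :=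
    mul_ne_zero (mul_ne_zero (pow_ne_zero 2 hα₂₁) hP₂₁) hD
  have hden3 : (α₃₁^2 * P₃₁ * (g₂₁ * P₂₂ * P₃₁ - g₃₁ * P₂₁ * P₃₂) : ℝ) ≠ 0 :=
    mul_ne_zero (mul_ne_zero (pow_ne_zero 2 hα₃₁) hP₃₁) hND
  have hden2' : ((α₂₁^2 * P₂₁ * (g₃₁ * P₂₁ * P₃₂ - g₂₁ * P₂₂ * P₃₁) : ℝ) : ℂ) ≠ 0 :=
    Complex.ofReal_ne_zero.mpr hden2
  have hden3' : ((α₃₁^2 * P₃₁ * (g₂₁ * P₂₂ * P₃₁ - g₃₁ * P₂₁ * P₃₂) : ℝ) : ℂ) ≠ 0 :=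
    Complex.ofReal_ne_zero.mpr hden3
  set Ar : ℝ := 2 * (α₂₁ * P₂₁^2 * (g₃₁ * P₃₂) - α₃₁ * P₃₁^2 * (g₂₁ * P₂₂))
      / (g₃₁ * P₂₁ * P₃₂ - g₂₁ * P₂₂ * P₃₁) with hAdef
  set Br : ℝ := 3 * (P₂₁ * (α₃₁ * P₃₁^2) - P₃₁ * (α₂₁ * P₂₁^2))
      / (g₃₁ * P₂₁ * P₃₂ - g₂₁ * P₂₂ * P₃₁) with hBdef
  have key : ∀ z : ℂ, b₂ z * (α₂₁ : ℂ)^3 * (P₂₁ : ℂ)^3 + b₃ z * (α₃₁ : ℂ)^3 * (P₃₁ : ℂ)^3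
      = (Ar : ℂ) * phi 3 z + (Br : ℂ) * phi 4 z := by
    have c1r : (2 * g₃₁ * P₃₂) / (α₂₁^2 * P₂₁ * (g₃₁ * P₂₁ * P₃₂ - g₂₁ * P₂₂ * P₃₁))
          * (α₂₁^3 * P₂₁^3)
        + (2 * g₂₁ * P₂₂) / (α₃₁^2 * P₃₁ * (g₂₁ * P₂₂ * P₃₁ - g₃₁ * P₂₁ * P₃₂))
          * (α₃₁^3 * P₃₁^3) = Ar := by
      rw [hAdef]
      rw [show g₂₁ * P₂₂ * P₃₁ - g₃₁ * P₂₁ * P₃₂ = -(g₃₁ * P₂₁ * P₃₂ - g₂₁ * P₂₂ * P₃₁) by ring]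
      field_simp
      ring
    have c2r : (3 * P₃₁) / (α₂₁^2 * P₂₁ * (g₃₁ * P₂₁ * P₃₂ - g₂₁ * P₂₂ * P₃₁))
          * (α₂₁^3 * P₂₁^3)
        + (3 * P₂₁) / (α₃₁^2 * P₃₁ * (g₂₁ * P₂₂ * P₃₁ - g₃₁ * P₂₁ * P₃₂))
          * (α₃₁^3 * P₃₁^3) = -Br := by
      rw [hBdef]
      rw [show g₂₁ * P₂₂ * P₃₁ - g₃₁ * P₂₁ * P₃₂ = -(g₃₁ * P₂₁ * P₃₂ - g₂₁ * P₂₂ * P₃₁) by ring]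
      field_simp
      ring
    have c1 := congrArg (fun x : ℝ => (x : ℂ)) c1r
    have c2 := congrArg (fun x : ℝ => (x : ℂ)) c2r
    push_cast at c1 c2
    intro z
    rw [hb₂ z, hb₃ z]
    push_cast
    linear_combination phi 3 z * c1 - phi 4 z * c2
  constructor
  · intro h
    have h' : ∀ z : ℂ, (Ar : ℂ) * phi 3 z + (Br : ℂ) * phi 4 z = 6 * phi 4 z := by
      intro z; rw [← key z]; exact h z
    obtain ⟨hA0, hB6⟩ := phi_combo _ _ h'
    have hA0' : Ar = 0 := by exact_mod_cast hA0
    have hB6' : Br = 6 := by exact_mod_cast hB6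
    rw [hAdef, div_eq_iff hD] at hA0'
    rw [hBdef, div_eq_iff hD] at hB6'
    constructor
    · rw [eq_div_iff (pow_ne_zero 2 hP₂₁)]
      have h : (α₂₁ * P₂₁^2) * (g₃₁ * P₂₁ * P₃₂ - g₂₁ * P₂₂ * P₃₁)
          = (2 * g₂₁ * P₂₂) * (g₃₁ * P₂₁ * P₃₂ - g₂₁ * P₂₂ * P₃₁) := by
        linear_combination P₂₁ * hA0' / 2 + (g₂₁ * P₂₂) * hB6' / 3
      exact mul_right_cancel₀ hD h
    · rw [eq_div_iff (pow_ne_zero 2 hP₃₁)]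
      have h : (α₃₁ * P₃₁^2) * (g₃₁ * P₂₁ * P₃₂ - g₂₁ * P₂₂ * P₃₁)
          = (2 * g₃₁ * P₃₂) * (g₃₁ * P₂₁ * P₃₂ - g₂₁ * P₂₂ * P₃₁) := by
        linear_combination P₃₁ * hA0' / 2 + (g₃₁ * P₃₂) * hB6' / 3
      exact mul_right_cancel₀ hD h
  · rintro ⟨h2, h3⟩
    intro z
    rw [key z]
    have hA0 : Ar = 0 := by
      rw [hAdef, h2, h3, div_eq_iff hD]
      field_simp
      ring
    have hB6 : Br = 6 := by
      rw [hBdef, h2, h3, div_eq_iff hD]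
      field_simp
      ring
    rw [hA0, hB6]
    push_cast
    ring
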